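/- There exist ε₀ > 0 and C > 0 (depending only on N, k, d, r, ξ₀) such that for every ε ∈ (0,ε₀), every admissible (μ,σ), every l ∈ {1,…,k} and every j ∈ {1,…,k} with j ≠ l, one has ∫_{A_l} U_l(x)^p U_j(x) dx ≤ C ε^{(N-4)|l-j|θ/(2k)}. -/

import Mathlib

open MeasureTheory Metric

/-- `α_N = (N(N-4)(N-2)(N+2))^((N-4)/8)`. -/
noncomputable def alphaN (N : ℕ) : ℝ :=
  ((N : ℝ) * ((N : ℝ) - 4) * ((N : ℝ) - 2) * ((N : ℝ) + 2)) ^ (((N : ℝ) - 4) / 8)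

/-- The critical exponent `p = (N+4)/(N-4)`. -/
noncomputable def pexp (N : ℕ) : ℝ := ((N : ℝ) + 4) / ((N : ℝ) - 4)

/-- The standard bubble `U_{μ,ξ}(x) = α_N (μ/(μ² + |x-ξ|²))^((N-4)/2)`. -/
noncomputable def bubble (N : ℕ) (μ : ℝ) (ξ : EuclideanSpace ℝ (Fin N))
    (x : EuclideanSpace ℝ (Fin N)) : ℝ :=
  alphaN N * (μ / (μ ^ 2 + ‖x - ξ‖ ^ 2)) ^ (((N : ℝ) - 4) / 2)

/-- `θ = 2k(N-2)/(2k(N-2)-2)`. -/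
noncomputable def theta (N k : ℕ) : ℝ :=
  (2 * (k : ℝ) * ((N : ℝ) - 2)) / (2 * (k : ℝ) * ((N : ℝ) - 2) - 2)

/-- `μ_{jε} = μ_j ε^((2j-1)θ/(2k))` (indices `j = 1, …, k`). -/
noncomputable def muScaled (N k : ℕ) (μ : ℕ → ℝ) (ε : ℝ) (j : ℕ) : ℝ :=
  μ j * ε ^ ((2 * (j : ℝ) - 1) * theta N k / (2 * (k : ℝ)))

/-- `ξ_{jε} = ξ₀ + μ_{jε} σ_j`. -/
noncomputable def xiScaled (N k : ℕ) (ξ₀ : EuclideanSpace ℝ (Fin N)) (μ : ℕ → ℝ)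
    (σ : ℕ → EuclideanSpace ℝ (Fin N)) (ε : ℝ) (j : ℕ) : EuclideanSpace ℝ (Fin N) :=
  ξ₀ + muScaled N k μ ε j • σ j

/-- `U_j = U_{μ_{jε}, ξ_{jε}}`. -/
noncomputable def Ubub (N k : ℕ) (ξ₀ : EuclideanSpace ℝ (Fin N)) (μ : ℕ → ℝ)
    (σ : ℕ → EuclideanSpace ℝ (Fin N)) (ε : ℝ) (j : ℕ)
    (x : EuclideanSpace ℝ (Fin N)) : ℝ :=
  bubble N (muScaled N k μ ε j) (xiScaled N k ξ₀ μ σ ε j) x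

/-- The annulus `A_l = B(ξ₀, √(μ_{lε}μ_{(l-1)ε})) ∖ B(ξ₀, √(μ_{lε}μ_{(l+1)ε}))`,
with the conventions `μ_{0ε}μ_{1ε} = r²` and `μ_{kε}μ_{(k+1)ε} = ε²`. -/
noncomputable def annulus (N k : ℕ) (ξ₀ : EuclideanSpace ℝ (Fin N)) (μ : ℕ → ℝ)
    (r ε : ℝ) (l : ℕ) : Set (EuclideanSpace ℝ (Fin N)) :=
  ball ξ₀ (if l = 1 then r else Real.sqrt (muScaled N k μ ε l * muScaled N k μ ε (l - 1))) \
  ball ξ₀ (if l = k then ε else Real.sqrt (muScaled N k μ ε l * muScaled N k μ ε (l + 1)))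

/-- `(μ,σ)` is admissible: `d < μ_j < 1/d` and `|σ_j| < 1/d` for `j = 1, …, k`. -/
def admissible (N k : ℕ) (d : ℝ) (μ : ℕ → ℝ) (σ : ℕ → EuclideanSpace ℝ (Fin N)) : Prop :=
  ∀ j, 1 ≤ j → j ≤ k → d < μ j ∧ μ j < 1 / d ∧ ‖σ j‖ < 1 / d


open Real
open scoped ENNReal

noncomputable abbrev Ecl (N : ℕ) := EuclideanSpace ℝ (Fin N)
noncomputable def stmt4q (N : ℕ) : ℝ := ((N:ℝ) + 4) / 2
noncomputable def stmt4m (N : ℕ) : ℝ := ((N:ℝ) - 4) / 2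
noncomputable def stmt4H (N : ℕ) : Ecl N → ℝ := fun y => ((1:ℝ) + ‖y‖ ^ 2) ^ (-stmt4q N)
noncomputable def stmt4Iq (N : ℕ) : ℝ := ∫ y : Ecl N, stmt4H N y
noncomputable def stmt4c0 (N : ℕ) : ℝ :=
  ∫ y in closedBall (0:Ecl N) 1, ‖y‖ ^ ((4:ℝ) - (N:ℝ))
noncomputable def stmt4G (N : ℕ) (σ : Ecl N) : Ecl N → ℝ :=
  fun y => ((1:ℝ) + ‖y - σ‖ ^ 2) ^ (-stmt4q N) * ‖y‖ ^ ((4:ℝ) - (N:ℝ))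

lemma shell_pow_eq {N : ℕ} (hN : 5 ≤ N) (n : ℕ) :
    ((2:ℝ)⁻¹ ^ (n+1)) ^ ((4:ℝ) - (N:ℝ)) * ((2:ℝ)⁻¹ ^ n) ^ (N:ℕ)
      = (2:ℝ) ^ ((N:ℝ) - 4) * ((16:ℝ)⁻¹) ^ n := by
  have h2 : (0:ℝ) < 2 := two_pos
  have e0 : (2:ℝ)⁻¹ = 2 ^ (-1 : ℝ) := by rw [Real.rpow_neg_one]
  have e1 : ((2:ℝ)⁻¹ ^ (n+1)) ^ ((4:ℝ) - (N:ℝ)) = (2:ℝ) ^ ((-1 : ℝ) * (n+1) * (4 - (N:ℝ))) := by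
    rw [e0, ← Real.rpow_natCast ((2:ℝ) ^ (-1:ℝ)) (n+1), ← Real.rpow_mul h2.le,
      ← Real.rpow_mul h2.le]
    push_cast
    ring_nf
  have e2 : ((2:ℝ)⁻¹ ^ n) ^ (N:ℕ) = (2:ℝ) ^ ((-1 : ℝ) * n * N) := by
    rw [e0, ← Real.rpow_natCast ((2:ℝ) ^ (-1:ℝ)) n, ← Real.rpow_mul h2.le,
      ← Real.rpow_natCast ((2:ℝ) ^ ((-1:ℝ) * n)) N, ← Real.rpow_mul h2.le]
  have e3 : ((16:ℝ)⁻¹) ^ n = (2:ℝ) ^ ((-4 : ℝ) * n) := by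
    have : (16:ℝ)⁻¹ = 2 ^ (-4 : ℝ) := by
      rw [Real.rpow_neg h2.le]; norm_num
    rw [this, ← Real.rpow_natCast ((2:ℝ) ^ (-4:ℝ)) n, ← Real.rpow_mul h2.le]
  rw [e1, e2, e3, ← Real.rpow_add h2, ← Real.rpow_add h2]
  ring_nf

lemma integrableOn_norm_rpow {N : ℕ} (hN : 5 ≤ N) :
    IntegrableOn (fun y : Ecl N => ‖y‖ ^ ((4:ℝ) - (N:ℝ))) (closedBall (0 : Ecl N) 1) volume := by
  have hN5 : (5:ℝ) ≤ (N:ℝ) := by exact_mod_cast hN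
  have hc : ((4:ℝ) - (N:ℝ)) ≠ 0 := by linarith
  have hcneg : ((4:ℝ) - (N:ℝ)) ≤ 0 := by linarith
  set S : ℕ → Set (Ecl N) :=
    fun n => closedBall (0:Ecl N) ((2:ℝ)⁻¹ ^ n) \ ball 0 ((2:ℝ)⁻¹ ^ (n+1)) with hS
  constructor
  · exact (by fun_prop : Measurable (fun y : Ecl N => ‖y‖ ^ ((4:ℝ) - (N:ℝ)))).aestronglyMeasurable
  · rw [hasFiniteIntegral_iff_ofReal
      (Filter.Eventually.of_forall fun y => rpow_nonneg (norm_nonneg _) _)]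
    have cover : closedBall (0:Ecl N) 1 ⊆ {0} ∪ ⋃ n : ℕ, S n := by
      intro y hy
      rcases eq_or_ne y 0 with rfl | hy0
      · exact Or.inl rfl
      · right
        have hy1 : ‖y‖ ≤ 1 := by simpa [mem_closedBall_zero_iff] using hy
        have hy0' : 0 < ‖y‖ := norm_pos_iff.2 hy0
        have hex : ∃ n : ℕ, (2:ℝ)⁻¹ ^ (n+1) < ‖y‖ := by
          obtain ⟨n, hn⟩ := exists_pow_lt_of_lt_one hy0' (by norm_num : (2:ℝ)⁻¹ < 1)
          exact ⟨n, lt_of_le_of_lt (pow_le_pow_of_le_one (by norm_num) (by norm_num) (by omega)) hn⟩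
        classical
        refine Set.mem_iUnion.2 ⟨Nat.find hex, ?_, ?_⟩
        · rw [mem_closedBall_zero_iff]
          rcases Nat.eq_zero_or_pos (Nat.find hex) with h0 | hpos
          · rw [h0]; simpa using hy1
          · have hlt := Nat.find_min hex (Nat.pred_lt hpos.ne')
            push_neg at hlt
            refine hlt.trans (le_of_eq ?_)
            congr 1
            exact Nat.succ_pred_eq_of_pos hpos
        · intro hmem
          rw [mem_ball_zero_iff] at hmem
          exact absurd (Nat.find_spec hex) (not_lt.2 hmem.le)
    set V : ℝ≥0∞ := volume (ball (0:Ecl N) 1) with hV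
    have hVne : V ≠ ⊤ := measure_ball_lt_top.ne
    have bound : ∀ n : ℕ, (∫⁻ y in S n, ENNReal.ofReal (‖y‖ ^ ((4:ℝ) - (N:ℝ))))
        ≤ (ENNReal.ofReal ((2:ℝ) ^ ((N:ℝ) - 4)) * V) * ENNReal.ofReal ((16:ℝ)⁻¹) ^ n := by
      intro n
      have hSn : MeasurableSet (S n) := measurableSet_closedBall.diff measurableSet_ball
      have step1 : (∫⁻ y in S n, ENNReal.ofReal (‖y‖ ^ ((4:ℝ) - (N:ℝ))))
          ≤ ∫⁻ _ in S n, ENNReal.ofReal (((2:ℝ)⁻¹ ^ (n+1)) ^ ((4:ℝ) - (N:ℝ))) := by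
        refine setLIntegral_mono' hSn fun y hy => ?_
        refine ENNReal.ofReal_le_ofReal ?_
        have hylb : (2:ℝ)⁻¹ ^ (n+1) ≤ ‖y‖ := by
          have := hy.2
          rw [mem_ball_zero_iff] at this
          push_neg at this; exact this
        exact Real.rpow_le_rpow_of_nonpos (by positivity) hylb hcneg
      rw [setLIntegral_const] at step1
      refine step1.trans ?_
      have step2 : volume (S n) ≤ ENNReal.ofReal (((2:ℝ)⁻¹ ^ n) ^ (N:ℕ)) * V := by
        calc volume (S n) ≤ volume (closedBall (0:Ecl N) ((2:ℝ)⁻¹ ^ n)) :=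
              measure_mono Set.diff_subset
        _ = ENNReal.ofReal (((2:ℝ)⁻¹ ^ n) ^ Module.finrank ℝ (Ecl N)) * V :=
              Measure.addHaar_closedBall _ _ (by positivity)
        _ = ENNReal.ofReal (((2:ℝ)⁻¹ ^ n) ^ (N:ℕ)) * V := by rw [finrank_euclideanSpace_fin]
      calc ENNReal.ofReal (((2:ℝ)⁻¹ ^ (n+1)) ^ ((4:ℝ) - (N:ℝ))) * volume (S n)
          ≤ ENNReal.ofReal (((2:ℝ)⁻¹ ^ (n+1)) ^ ((4:ℝ) - (N:ℝ)))
            * (ENNReal.ofReal (((2:ℝ)⁻¹ ^ n) ^ (N:ℕ)) * V) := by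
            exact mul_le_mul_right step2 _
      _ = ENNReal.ofReal (((2:ℝ)⁻¹ ^ (n+1)) ^ ((4:ℝ) - (N:ℝ)) * ((2:ℝ)⁻¹ ^ n) ^ (N:ℕ)) * V := by
            rw [ENNReal.ofReal_mul (by positivity), mul_assoc]
      _ = (ENNReal.ofReal ((2:ℝ) ^ ((N:ℝ) - 4)) * V) * ENNReal.ofReal ((16:ℝ)⁻¹) ^ n := by
            rw [shell_pow_eq hN n, ENNReal.ofReal_mul (by positivity),
              ENNReal.ofReal_pow (by norm_num)]
            ring
    calc (∫⁻ y in closedBall (0:Ecl N) 1, ENNReal.ofReal (‖y‖ ^ ((4:ℝ) - (N:ℝ))))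
        ≤ ∫⁻ y in ({0} ∪ ⋃ n : ℕ, S n), ENNReal.ofReal (‖y‖ ^ ((4:ℝ) - (N:ℝ))) :=
          lintegral_mono_set cover
    _ ≤ (∫⁻ y in ({0} : Set (Ecl N)), ENNReal.ofReal (‖y‖ ^ ((4:ℝ) - (N:ℝ))))
          + ∫⁻ y in (⋃ n : ℕ, S n), ENNReal.ofReal (‖y‖ ^ ((4:ℝ) - (N:ℝ))) :=
          lintegral_union_le _ _ _
    _ ≤ 0 + ∑' n : ℕ, ∫⁻ y in S n, ENNReal.ofReal (‖y‖ ^ ((4:ℝ) - (N:ℝ))) := by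
          gcongr
          · rw [lintegral_singleton]
            simp [Real.zero_rpow hc]
          · exact lintegral_iUnion_le _ _
    _ ≤ 0 + ∑' n : ℕ, (ENNReal.ofReal ((2:ℝ) ^ ((N:ℝ) - 4)) * V) * ENNReal.ofReal ((16:ℝ)⁻¹) ^ n := by
          gcongr with n
          exact bound n
    _ = (ENNReal.ofReal ((2:ℝ) ^ ((N:ℝ) - 4)) * V) * (1 - ENNReal.ofReal ((16:ℝ)⁻¹))⁻¹ := by
          rw [zero_add, ENNReal.tsum_mul_left, ENNReal.tsum_geometric]
    _ < ⊤ := by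
          refine ENNReal.mul_lt_top (ENNReal.mul_lt_top ENNReal.ofReal_lt_top hVne.lt_top) ?_
          refine ENNReal.inv_lt_top.2 (tsub_pos_of_lt ?_)
          exact ENNReal.ofReal_lt_one.2 (by norm_num)

lemma alphaN_pos {N : ℕ} (hN : 5 ≤ N) : 0 < alphaN N := by
  have h5 : (5:ℝ) ≤ (N:ℝ) := by exact_mod_cast hN
  have h1 : (0:ℝ) < (N:ℝ) := by linarith
  have h2 : (0:ℝ) < (N:ℝ) - 4 := by linarith
  have h3 : (0:ℝ) < (N:ℝ) - 2 := by linarith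
  have h4 : (0:ℝ) < (N:ℝ) + 2 := by linarith
  exact Real.rpow_pos_of_pos (mul_pos (mul_pos (mul_pos h1 h2) h3) h4) _

lemma bubble_nonneg {N : ℕ} (hN : 5 ≤ N) {μ : ℝ} (hμ : 0 ≤ μ) (ξ x : Ecl N) :
    0 ≤ bubble N μ ξ x :=
  mul_nonneg (alphaN_pos hN).le
    (Real.rpow_nonneg (div_nonneg hμ (by positivity)) _)

lemma stmt4H_nonneg {N : ℕ} (y : Ecl N) : 0 ≤ stmt4H N y := Real.rpow_nonneg (by positivity) _

lemma integrableH {N : ℕ} (hN : 5 ≤ N) : Integrable (stmt4H N) := by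
  have h : ((Module.finrank ℝ (Ecl N)) : ℝ) < (N:ℝ)+4 := by
    rw [finrank_euclideanSpace_fin]; linarith
  have := integrable_rpow_neg_one_add_norm_sq (μ := (volume : Measure (Ecl N))) h
  unfold stmt4H stmt4q
  convert this using 3 with y
  ring

lemma stmt4Iq_nonneg {N : ℕ} : 0 ≤ stmt4Iq N :=
  integral_nonneg fun y => stmt4H_nonneg y

lemma scale_integral {N : ℕ} (c : ℝ) (hc : 0 < c) (ξ : Ecl N) (g : Ecl N → ℝ) :
    ∫ x, g (c⁻¹ • (x - ξ)) = c ^ N * ∫ y, g y := by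
  have h1 : ∫ x : Ecl N, g (c⁻¹ • (x - ξ)) = ∫ x : Ecl N, (fun z => g (c⁻¹ • z)) (x - ξ) := rfl
  rw [h1, integral_sub_right_eq_self (fun z => g (c⁻¹ • z)) ξ,
      Measure.integral_comp_inv_smul_of_nonneg volume g hc.le, finrank_euclideanSpace_fin,
      smul_eq_mul]

lemma base_eq {N : ℕ} {μ : ℝ} (hμ : 0 < μ) (ξ x : Ecl N) :
    μ / (μ ^ 2 + ‖x - ξ‖ ^ 2) = μ⁻¹ * ((1:ℝ) + ‖μ⁻¹ • (x - ξ)‖ ^ 2)⁻¹ := by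
  have h1 : ‖μ⁻¹ • (x - ξ)‖ ^ 2 = μ⁻¹ ^ 2 * ‖x - ξ‖ ^ 2 := by
    rw [norm_smul]
    rw [Real.norm_eq_abs, abs_of_pos (inv_pos.2 hμ)]
    ring
  have h2 : (0:ℝ) < μ ^ 2 + ‖x - ξ‖ ^ 2 := by positivity
  rw [h1]
  field_simp

lemma mul_inv_rpow {μ w : ℝ} (hμ : 0 < μ) (hw : 0 < w) (e : ℝ) :
    (μ⁻¹ * w⁻¹) ^ e = μ ^ (-e) * w ^ (-e) := by
  rw [Real.mul_rpow (by positivity) (by positivity), Real.inv_rpow hμ.le, Real.inv_rpow hw.le,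
    ← Real.rpow_neg hμ.le, ← Real.rpow_neg hw.le]

/-- `bubble^p` in scaled form. -/

lemma bubble_rpow_pexp {N : ℕ} (hN : 5 ≤ N) {μ : ℝ} (hμ : 0 < μ) (ξ x : Ecl N) :
    bubble N μ ξ x ^ pexp N
      = alphaN N ^ pexp N * (μ ^ (-stmt4q N) * stmt4H N (μ⁻¹ • (x - ξ))) := by
  have h5 : (5:ℝ) ≤ (N:ℝ) := by exact_mod_cast hN
  have hw : (0:ℝ) < 1 + ‖μ⁻¹ • (x - ξ)‖ ^ 2 := by positivity
  have hbase : (0:ℝ) ≤ μ / (μ ^ 2 + ‖x - ξ‖ ^ 2) := by positivity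
  rw [bubble, Real.mul_rpow (alphaN_pos hN).le (Real.rpow_nonneg hbase _),
    ← Real.rpow_mul hbase]
  have hne : (N:ℝ) - 4 ≠ 0 := by linarith
  have hexp : ((N:ℝ) - 4) / 2 * pexp N = stmt4q N := by
    rw [pexp, stmt4q]
    field_simp
  rw [hexp, base_eq hμ ξ x, mul_inv_rpow hμ hw, stmt4H]

/-- Case `j < l` master bound. -/

lemma caseA {N : ℕ} (hN : 5 ≤ N) {μl μj : ℝ} (hμl : 0 < μl) (hμj : 0 < μj)
    (ξl ξj : Ecl N) (s : Set (Ecl N)) :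
    ∫ x in s, bubble N μl ξl x ^ pexp N * bubble N μj ξj x
      ≤ (alphaN N ^ pexp N * alphaN N * stmt4Iq N) * (μl ^ stmt4m N * μj ^ (-stmt4m N)) := by
  have h5 : (5:ℝ) ≤ (N:ℝ) := by exact_mod_cast hN
  have hA := alphaN_pos hN
  have hm : (0:ℝ) ≤ stmt4m N := by rw [stmt4m]; linarith
  set Cg : ℝ := alphaN N ^ pexp N * alphaN N * μj ^ (-stmt4m N) * μl ^ (-stmt4q N) with hCg
  have hCg0 : 0 ≤ Cg := by positivity
  set g : Ecl N → ℝ := fun x => Cg * stmt4H N (μl⁻¹ • (x - ξl)) with hg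
  have hgint : Integrable g :=
    (((integrableH hN).comp_smul (inv_ne_zero hμl.ne')).comp_sub_right ξl).const_mul Cg
  have hg0 : ∀ x, 0 ≤ g x := fun x => mul_nonneg hCg0 (stmt4H_nonneg _)
  have hfg : ∀ x, bubble N μl ξl x ^ pexp N * bubble N μj ξj x ≤ g x := by
    intro x
    have hUj : bubble N μj ξj x ≤ alphaN N * μj ^ (-stmt4m N) := by
      rw [bubble]
      have hb : μj / (μj ^ 2 + ‖x - ξj‖ ^ 2) ≤ μj⁻¹ := by
        rw [div_le_iff₀ (by positivity)]
        have h2 : μj⁻¹ * (μj ^ 2 + ‖x - ξj‖ ^ 2) = μj + μj⁻¹ * ‖x - ξj‖ ^ 2 := by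
          field_simp
        rw [h2]
        have : 0 ≤ μj⁻¹ * ‖x - ξj‖ ^ 2 := by positivity
        linarith
      have := Real.rpow_le_rpow (by positivity) hb hm
      rw [Real.inv_rpow hμj.le, ← Real.rpow_neg hμj.le] at this
      rw [stmt4m]
      exact mul_le_mul_of_nonneg_left (by rw [← stmt4m]; exact this) hA.le
    have hUl : 0 ≤ bubble N μl ξl x ^ pexp N := Real.rpow_nonneg (bubble_nonneg hN hμl.le _ _) _
    calc bubble N μl ξl x ^ pexp N * bubble N μj ξj x
        ≤ bubble N μl ξl x ^ pexp N * (alphaN N * μj ^ (-stmt4m N)) :=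
          mul_le_mul_of_nonneg_left hUj hUl
    _ = g x := by
        rw [bubble_rpow_pexp hN hμl ξl x, hg, hCg]; ring
  calc ∫ x in s, bubble N μl ξl x ^ pexp N * bubble N μj ξj x
      ≤ ∫ x in s, g x := by
        refine integral_mono_of_nonneg ?_ hgint.integrableOn ?_
        · exact Filter.Eventually.of_forall fun x =>
            mul_nonneg (Real.rpow_nonneg (bubble_nonneg hN hμl.le _ _) _)
              (bubble_nonneg hN hμj.le _ _)
        · exact Filter.Eventually.of_forall hfg
  _ ≤ ∫ x, g x := setIntegral_le_integral hgint (Filter.Eventually.of_forall hg0)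
  _ = Cg * (μl ^ (N:ℕ) * stmt4Iq N) := by
        have h1 : ∫ x, g x = Cg * ∫ x, stmt4H N (μl⁻¹ • (x - ξl)) :=
          integral_const_mul Cg _
        rw [h1, scale_integral μl hμl ξl (stmt4H N), stmt4Iq]
  _ = (alphaN N ^ pexp N * alphaN N * stmt4Iq N) * (μl ^ stmt4m N * μj ^ (-stmt4m N)) := by
        have hμN : μl ^ (-stmt4q N) * μl ^ (((N:ℕ)):ℝ) = μl ^ stmt4m N := by
          rw [← Real.rpow_add hμl]
          congr 1
          rw [stmt4q, stmt4m]; push_cast; ring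
        calc Cg * (μl ^ (N:ℕ) * stmt4Iq N)
            = alphaN N ^ pexp N * alphaN N * stmt4Iq N
              * ((μl ^ (-stmt4q N) * μl ^ (((N:ℕ)):ℝ)) * μj ^ (-stmt4m N)) := by
              rw [hCg, ← Real.rpow_natCast μl N]; ring
        _ = (alphaN N ^ pexp N * alphaN N * stmt4Iq N) * (μl ^ stmt4m N * μj ^ (-stmt4m N)) := by
              rw [hμN]

lemma stmt4q_nonneg {N : ℕ} : 0 ≤ stmt4q N := by
  rw [stmt4q]; positivity

lemma stmt4G_nonneg {N : ℕ} (σ y : Ecl N) : 0 ≤ stmt4G N σ y :=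
  mul_nonneg (Real.rpow_nonneg (by positivity) _) (Real.rpow_nonneg (norm_nonneg _) _)

lemma stmt4c0_nonneg {N : ℕ} : 0 ≤ stmt4c0 N :=
  integral_nonneg fun y => Real.rpow_nonneg (norm_nonneg _) _

lemma stmt4G_integrable {N : ℕ} (hN : 5 ≤ N) (σ : Ecl N) :
    Integrable (stmt4G N σ) ∧ ∫ y, stmt4G N σ y ≤ stmt4c0 N + stmt4Iq N := by
  have hN5 : (5:ℝ) ≤ (N:ℝ) := by exact_mod_cast hN
  set h : Ecl N → ℝ := fun y =>
    Set.indicator (closedBall (0:Ecl N) 1) (fun y => ‖y‖ ^ ((4:ℝ)-(N:ℝ))) y + stmt4H N (y - σ)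
    with hh
  have hind : Integrable (fun y : Ecl N =>
      Set.indicator (closedBall (0:Ecl N) 1) (fun y => ‖y‖ ^ ((4:ℝ)-(N:ℝ))) y) :=
    (integrable_indicator_iff measurableSet_closedBall).2 (integrableOn_norm_rpow hN)
  have htr : Integrable (fun y : Ecl N => stmt4H N (y - σ)) :=
    (integrableH hN).comp_sub_right σ
  have hint : Integrable h := hind.add htr
  have hGh : ∀ y, stmt4G N σ y ≤ h y := by
    intro y
    by_cases hy : ‖y‖ ≤ 1
    · have h1 : ((1:ℝ) + ‖y - σ‖ ^ 2) ^ (-stmt4q N) ≤ 1 :=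
        Real.rpow_le_one_of_one_le_of_nonpos (by nlinarith [sq_nonneg ‖y - σ‖])
          (neg_nonpos.2 stmt4q_nonneg)
      calc stmt4G N σ y ≤ 1 * ‖y‖ ^ ((4:ℝ)-(N:ℝ)) :=
            mul_le_mul_of_nonneg_right h1 (Real.rpow_nonneg (norm_nonneg _) _)
      _ = Set.indicator (closedBall (0:Ecl N) 1) (fun y => ‖y‖ ^ ((4:ℝ)-(N:ℝ))) y := by
            rw [one_mul, Set.indicator_of_mem (mem_closedBall_zero_iff.2 hy)]
      _ ≤ h y := le_add_of_nonneg_right (stmt4H_nonneg _)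
    · push_neg at hy
      have h2 : ‖y‖ ^ ((4:ℝ)-(N:ℝ)) ≤ 1 :=
        Real.rpow_le_one_of_one_le_of_nonpos hy.le (by linarith)
      calc stmt4G N σ y ≤ ((1:ℝ)+‖y-σ‖^2)^(-stmt4q N) * 1 :=
            mul_le_mul_of_nonneg_left h2 (Real.rpow_nonneg (by positivity) _)
      _ = stmt4H N (y - σ) := by rw [mul_one]; rfl
      _ ≤ h y := le_add_of_nonneg_left (Set.indicator_nonneg
            (fun z _ => Real.rpow_nonneg (norm_nonneg _) _) _)
  have hGmeas : Measurable (stmt4G N σ) := by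
    unfold stmt4G; fun_prop
  have hGint : Integrable (stmt4G N σ) := by
    refine hint.mono' hGmeas.aestronglyMeasurable (Filter.Eventually.of_forall fun y => ?_)
    rw [Real.norm_eq_abs, abs_of_nonneg (stmt4G_nonneg σ y)]
    exact hGh y
  refine ⟨hGint, ?_⟩
  calc ∫ y, stmt4G N σ y ≤ ∫ y, h y :=
        integral_mono_of_nonneg (Filter.Eventually.of_forall fun y => stmt4G_nonneg σ y)
          hint (Filter.Eventually.of_forall hGh)
  _ = stmt4c0 N + stmt4Iq N := by
      rw [hh, integral_add hind htr, integral_indicator measurableSet_closedBall,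
        integral_sub_right_eq_self (stmt4H N) σ, stmt4c0, stmt4Iq]

lemma caseB {N : ℕ} (hN : 5 ≤ N) {μl μj ρ : ℝ} (hμl : 0 < μl) (hμj : 0 < μj) (hρ : 0 < ρ)
    (ξ₀ σl σj : Ecl N) (hσj : μj * ‖σj‖ ≤ ρ / 2)
    {s : Set (Ecl N)} (hs : MeasurableSet s) (hsub : ∀ x ∈ s, ρ ≤ dist x ξ₀) :
    ∫ x in s, bubble N μl (ξ₀ + μl • σl) x ^ pexp N * bubble N μj (ξ₀ + μj • σj) x
      ≤ (alphaN N ^ pexp N * alphaN N * (4:ℝ) ^ stmt4m N * (stmt4c0 N + stmt4Iq N))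
        * (μj ^ stmt4m N * μl ^ (-stmt4m N)) := by
  have h5 : (5:ℝ) ≤ (N:ℝ) := by exact_mod_cast hN
  have hA := alphaN_pos hN
  have hm : (0:ℝ) ≤ stmt4m N := by rw [stmt4m]; linarith
  set Cg : ℝ := alphaN N ^ pexp N * alphaN N * (4:ℝ) ^ stmt4m N * μj ^ stmt4m N
      * (μl ^ (-stmt4q N) * μl ^ ((4:ℝ) - (N:ℝ))) with hCg
  have hCg0 : 0 ≤ Cg := by positivity
  set g : Ecl N → ℝ := fun x => Cg * stmt4G N σl (μl⁻¹ • (x - ξ₀)) with hg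
  have hgint : Integrable g :=
    ((((stmt4G_integrable hN σl).1).comp_smul (inv_ne_zero hμl.ne')).comp_sub_right ξ₀).const_mul Cg
  have hg0 : ∀ x, 0 ≤ g x := fun x => mul_nonneg hCg0 (stmt4G_nonneg _ _)
  -- pointwise bound on s
  have hfg : ∀ x ∈ s, bubble N μl (ξ₀ + μl • σl) x ^ pexp N * bubble N μj (ξ₀ + μj • σj) x
      ≤ g x := by
    intro x hx
    set y : Ecl N := μl⁻¹ • (x - ξ₀) with hy
    set t : ℝ := ‖x - ξ₀‖ with ht
    have hts : ρ ≤ t := by rw [ht, ← dist_eq_norm]; exact hsub x hx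
    have ht0 : 0 < t := lt_of_lt_of_le hρ hts
    -- ‖x - ξj‖ ≥ t/2
    have hxj : t / 2 ≤ ‖x - (ξ₀ + μj • σj)‖ := by
      have e1 : x - (ξ₀ + μj • σj) = (x - ξ₀) - μj • σj := by abel
      have e2 : ‖μj • σj‖ = μj * ‖σj‖ := by
        rw [norm_smul, Real.norm_eq_abs, abs_of_pos hμj]
      have := norm_sub_norm_le (x - ξ₀) (μj • σj)
      rw [e2] at this
      rw [e1]
      have : t - μj * ‖σj‖ ≤ ‖(x - ξ₀) - μj • σj‖ := by rw [ht]; exact this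
      linarith
    -- bound on U_j
    have hUj : bubble N μj (ξ₀ + μj • σj) x
        ≤ alphaN N * ((4:ℝ) ^ stmt4m N * μj ^ stmt4m N * t ^ ((4:ℝ) - (N:ℝ))) := by
      rw [bubble]
      have hden : (t/2)^2 ≤ μj ^ 2 + ‖x - (ξ₀ + μj • σj)‖ ^ 2 := by
        nlinarith [sq_nonneg μj, hxj, ht0]
      have hbase : μj / (μj ^ 2 + ‖x - (ξ₀ + μj • σj)‖ ^ 2) ≤ 4 * μj * (t^2)⁻¹ := by
        have h1 : μj / (μj ^ 2 + ‖x - (ξ₀ + μj • σj)‖ ^ 2) ≤ μj / ((t/2)^2) :=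
          div_le_div_of_nonneg_left hμj.le (by positivity) hden
        have h2 : μj / ((t/2)^2) = 4 * μj * (t^2)⁻¹ := by
          field_simp; ring
        rw [h2] at h1; exact h1
      have hrp := Real.rpow_le_rpow (by positivity) hbase hm
      have hsplit : (4 * μj * (t^2)⁻¹) ^ stmt4m N
          = (4:ℝ) ^ stmt4m N * μj ^ stmt4m N * t ^ ((4:ℝ) - (N:ℝ)) := by
        rw [Real.mul_rpow (by positivity) (by positivity),
          Real.mul_rpow (by norm_num) hμj.le,
          Real.inv_rpow (by positivity), ← Real.rpow_neg (by positivity)]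
        congr 1
        rw [← Real.rpow_natCast t 2, ← Real.rpow_mul ht0.le]
        congr 1
        rw [stmt4m]; push_cast; ring
      rw [hsplit] at hrp
      exact mul_le_mul_of_nonneg_left hrp hA.le
    -- scaled identities
    have hxl : μl⁻¹ • (x - (ξ₀ + μl • σl)) = y - σl := by
      rw [hy]
      have e1 : x - (ξ₀ + μl • σl) = (x - ξ₀) - μl • σl := by abel
      rw [e1, smul_sub, smul_smul, inv_mul_cancel₀ hμl.ne', one_smul]
    have hty : t = μl * ‖y‖ := by
      rw [hy, norm_smul, Real.norm_eq_abs, abs_of_pos (inv_pos.2 hμl), ht]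
      field_simp
    have htpow : t ^ ((4:ℝ) - (N:ℝ)) = μl ^ ((4:ℝ) - (N:ℝ)) * ‖y‖ ^ ((4:ℝ) - (N:ℝ)) := by
      rw [hty, Real.mul_rpow hμl.le (norm_nonneg _)]
    -- combine
    rw [bubble_rpow_pexp hN hμl (ξ₀ + μl • σl) x, hxl]
    calc alphaN N ^ pexp N * (μl ^ (-stmt4q N) * stmt4H N (y - σl))
          * bubble N μj (ξ₀ + μj • σj) x
        ≤ alphaN N ^ pexp N * (μl ^ (-stmt4q N) * stmt4H N (y - σl))
          * (alphaN N * ((4:ℝ) ^ stmt4m N * μj ^ stmt4m N * t ^ ((4:ℝ) - (N:ℝ)))) := by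
          refine mul_le_mul_of_nonneg_left hUj ?_
          have h0 : 0 ≤ stmt4H N (y - σl) := Real.rpow_nonneg (by positivity) _
          positivity
    _ = g x := by
        simp only [hg, hCg, stmt4G, stmt4H]
        rw [htpow]
        ring
  calc ∫ x in s, bubble N μl (ξ₀ + μl • σl) x ^ pexp N * bubble N μj (ξ₀ + μj • σj) x
      ≤ ∫ x in s, g x := by
        refine integral_mono_of_nonneg ?_ hgint.integrableOn ?_
        · exact Filter.Eventually.of_forall fun x =>
            mul_nonneg (Real.rpow_nonneg (bubble_nonneg hN hμl.le _ _) _)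
              (bubble_nonneg hN hμj.le _ _)
        · exact (ae_restrict_mem hs).mono hfg
  _ ≤ ∫ x, g x := setIntegral_le_integral hgint (Filter.Eventually.of_forall hg0)
  _ = Cg * (μl ^ (N:ℕ) * ∫ y, stmt4G N σl y) := by
        have h1 : ∫ x, g x = Cg * ∫ x, stmt4G N σl (μl⁻¹ • (x - ξ₀)) :=
          integral_const_mul Cg _
        rw [h1, scale_integral μl hμl ξ₀ (stmt4G N σl)]
  _ ≤ Cg * (μl ^ (N:ℕ) * (stmt4c0 N + stmt4Iq N)) := by
        refine mul_le_mul_of_nonneg_left ?_ hCg0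
        exact mul_le_mul_of_nonneg_left (stmt4G_integrable hN σl).2 (by positivity)
  _ = (alphaN N ^ pexp N * alphaN N * (4:ℝ) ^ stmt4m N * (stmt4c0 N + stmt4Iq N))
        * (μj ^ stmt4m N * μl ^ (-stmt4m N)) := by
        have hμN : μl ^ (-stmt4q N) * μl ^ ((4:ℝ) - (N:ℝ)) * μl ^ (((N:ℕ)):ℝ)
            = μl ^ (-stmt4m N) := by
          rw [← Real.rpow_add hμl, ← Real.rpow_add hμl]
          congr 1
          rw [stmt4q, stmt4m]; push_cast; ring
        calc Cg * (μl ^ (N:ℕ) * (stmt4c0 N + stmt4Iq N))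
            = alphaN N ^ pexp N * alphaN N * (4:ℝ) ^ stmt4m N * (stmt4c0 N + stmt4Iq N)
              * μj ^ stmt4m N
              * (μl ^ (-stmt4q N) * μl ^ ((4:ℝ) - (N:ℝ)) * μl ^ (((N:ℕ)):ℝ)) := by
              rw [hCg, ← Real.rpow_natCast μl N]; ring
        _ = _ := by rw [hμN]; ring

/-- Lemma 6.6, estimate (6.16): `∫_{A_l} U_l^p U_j = O(ε^{(N-4)|l-j|θ/(2k)})` for `j ≠ l`. -/
theorem statement4 (N k : ℕ) (hN : 5 ≤ N) (hk : 1 ≤ k)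
    (ξ₀ : EuclideanSpace ℝ (Fin N)) (d r : ℝ) (hd0 : 0 < d) (hd1 : d < 1) (hr : 0 < r) :
    ∃ ε₀ > (0 : ℝ), ∃ C > (0 : ℝ), ∀ ε : ℝ, 0 < ε → ε < ε₀ →
      ∀ (μ : ℕ → ℝ) (σ : ℕ → EuclideanSpace ℝ (Fin N)), admissible N k d μ σ →
      ∀ l, 1 ≤ l → l ≤ k → ∀ j, 1 ≤ j → j ≤ k → j ≠ l →
      ∫ x in annulus N k ξ₀ μ r ε l,
          Ubub N k ξ₀ μ σ ε l x ^ pexp N * Ubub N k ξ₀ μ σ ε j x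
        ≤ C * ε ^ (((N : ℝ) - 4) * |(l : ℝ) - (j : ℝ)| * theta N k / (2 * (k : ℝ))) := by
  have h5 : (5:ℝ) ≤ (N:ℝ) := by exact_mod_cast hN
  have hk1 : (1:ℝ) ≤ (k:ℝ) := by exact_mod_cast hk
  have hkne : (k:ℝ) ≠ 0 := by positivity
  have hA := alphaN_pos hN
  have hm0 : (0:ℝ) ≤ stmt4m N := by rw [stmt4m]; linarith
  set θ : ℝ := theta N k with hθdef
  have hθ : 0 < θ := by
    rw [hθdef, theta]
    apply div_pos <;> nlinarith
  have hθne : θ ≠ 0 := hθ.ne'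
  -- constants
  set D : ℝ := (d⁻¹ * d⁻¹) ^ stmt4m N with hD
  have hD0 : 0 < D := by positivity
  set KAB : ℝ := alphaN N ^ pexp N * alphaN N * (4:ℝ) ^ stmt4m N * D
      * (stmt4c0 N + stmt4Iq N + 1) with hKAB
  have hc0 : (0:ℝ) ≤ stmt4c0 N := stmt4c0_nonneg
  have hIq : (0:ℝ) ≤ stmt4Iq N := stmt4Iq_nonneg
  have hKAB0 : 0 ≤ KAB := by
    have : (0:ℝ) ≤ stmt4c0 N + stmt4Iq N + 1 := by linarith
    positivity
  have h4m : (1:ℝ) ≤ (4:ℝ) ^ stmt4m N := by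
    have := Real.rpow_le_rpow (by norm_num : (0:ℝ) ≤ 1) (by norm_num : (1:ℝ) ≤ 4) hm0
    rwa [Real.one_rpow] at this
  refine ⟨min 1 ((d^3/2) ^ (2*(k:ℝ)/θ)), ?_, KAB + 1, by linarith, ?_⟩
  · apply lt_min one_pos
    apply Real.rpow_pos_of_pos
    positivity
  intro ε hε hεlt μ σ hadm l hl1 hlk j hj1 hjk hjl
  have hε1 : ε ≤ 1 := le_of_lt (lt_of_lt_of_le hεlt (min_le_left _ _))
  -- basic admissibility facts
  obtain ⟨hμl_lb, hμl_ub, hσl_ub⟩ := hadm l hl1 hlk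
  obtain ⟨hμj_lb, hμj_ub, hσj_ub⟩ := hadm j hj1 hjk
  have hμlpos : 0 < μ l := lt_trans hd0 hμl_lb
  have hμjpos : 0 < μ j := lt_trans hd0 hμj_lb
  set e : ℕ → ℝ := fun i => (2 * (i:ℝ) - 1) * θ / (2 * (k:ℝ)) with he
  have hmS : ∀ i, muScaled N k μ ε i = μ i * ε ^ e i := fun i => rfl
  have hmSpos : ∀ i, 1 ≤ i → i ≤ k → 0 < muScaled N k μ ε i := by
    intro i hi1 hik
    obtain ⟨hlb, _, _⟩ := hadm i hi1 hik
    rw [hmS]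
    have : 0 < ε ^ e i := Real.rpow_pos_of_pos hε _
    exact mul_pos (lt_trans hd0 hlb) this
  -- the common exponent target
  set T : ℝ := ((N : ℝ) - 4) * |(l : ℝ) - (j : ℝ)| * θ / (2 * (k : ℝ)) with hT
  have hεT : 0 < ε ^ T := Real.rpow_pos_of_pos hε _
  -- ratio lemma: μa * ε^a raised to m times (μb * ε^b)^(-m)
  have ratio : ∀ (a b : ℕ), 1 ≤ a → a ≤ k → 1 ≤ b → b ≤ k →
      (muScaled N k μ ε a) ^ stmt4m N * (muScaled N k μ ε b) ^ (-stmt4m N)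
        ≤ D * ε ^ ((e a - e b) * stmt4m N) := by
    intro a b ha1 hak hb1 hbk
    obtain ⟨halb, haub, _⟩ := hadm a ha1 hak
    obtain ⟨hblb, hbub, _⟩ := hadm b hb1 hbk
    have hapos : 0 < μ a := lt_trans hd0 halb
    have hbpos : 0 < μ b := lt_trans hd0 hblb
    have hεa : 0 < ε ^ e a := Real.rpow_pos_of_pos hε _
    have hεb : 0 < ε ^ e b := Real.rpow_pos_of_pos hε _
    rw [hmS, hmS, Real.mul_rpow hapos.le hεa.le, Real.mul_rpow hbpos.le hεb.le]
    have hεpart : (ε ^ e a) ^ stmt4m N * (ε ^ e b) ^ (-stmt4m N)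
        = ε ^ ((e a - e b) * stmt4m N) := by
      rw [← Real.rpow_mul hε.le, ← Real.rpow_mul hε.le, ← Real.rpow_add hε]
      congr 1
      ring
    have hμa : (μ a) ^ stmt4m N ≤ (d⁻¹) ^ stmt4m N :=
      Real.rpow_le_rpow hapos.le (by rw [← one_div]; exact haub.le) hm0
    have hμb : (μ b) ^ (-stmt4m N) ≤ (d⁻¹) ^ stmt4m N := by
      rw [Real.rpow_neg hbpos.le, ← Real.inv_rpow hbpos.le]
      exact Real.rpow_le_rpow (by positivity) (inv_anti₀ hd0 hblb.le) hm0
    calc μ a ^ stmt4m N * (ε ^ e a) ^ stmt4m N * (μ b ^ (-stmt4m N) * (ε ^ e b) ^ (-stmt4m N))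
        = (μ a ^ stmt4m N * μ b ^ (-stmt4m N)) * ((ε ^ e a) ^ stmt4m N * (ε ^ e b) ^ (-stmt4m N)) := by
          ring
    _ ≤ ((d⁻¹) ^ stmt4m N * (d⁻¹) ^ stmt4m N) * ((ε ^ e a) ^ stmt4m N * (ε ^ e b) ^ (-stmt4m N)) := by
          have h1 : 0 ≤ (ε ^ e a) ^ stmt4m N * (ε ^ e b) ^ (-stmt4m N) := by positivity
          refine mul_le_mul_of_nonneg_right ?_ h1
          exact mul_le_mul hμa hμb (Real.rpow_nonneg hbpos.le _) (by positivity)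
    _ = D * ε ^ ((e a - e b) * stmt4m N) := by
          rw [hεpart, hD, Real.mul_rpow (by positivity) (by positivity)]
  -- unfold the integrand
  have hgoal : ∀ x, Ubub N k ξ₀ μ σ ε l x ^ pexp N * Ubub N k ξ₀ μ σ ε j x
      = bubble N (muScaled N k μ ε l) (ξ₀ + muScaled N k μ ε l • σ l) x ^ pexp N
        * bubble N (muScaled N k μ ε j) (ξ₀ + muScaled N k μ ε j • σ j) x := fun x => rfl
  have hml : 0 < muScaled N k μ ε l := hmSpos l hl1 hlk
  have hmj : 0 < muScaled N k μ ε j := hmSpos j hj1 hjk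
  rcases lt_or_gt_of_ne hjl with hcase | hcase
  · -- j < l : caseA
    have hjlR : (j:ℝ) < (l:ℝ) := by exact_mod_cast hcase
    have habs : |(l : ℝ) - (j : ℝ)| = (l:ℝ) - (j:ℝ) := abs_of_pos (by linarith)
    have hTid : (e l - e j) * stmt4m N = T := by
      rw [hT, habs, he, stmt4m]
      field_simp
      ring
    have hb := caseA hN hml hmj (xiScaled N k ξ₀ μ σ ε l) (xiScaled N k ξ₀ μ σ ε j)
      (annulus N k ξ₀ μ r ε l)
    have hr2 := ratio l j hl1 hlk hj1 hjk
    rw [hTid] at hr2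
    calc ∫ x in annulus N k ξ₀ μ r ε l,
          Ubub N k ξ₀ μ σ ε l x ^ pexp N * Ubub N k ξ₀ μ σ ε j x
        ≤ (alphaN N ^ pexp N * alphaN N * stmt4Iq N)
            * ((muScaled N k μ ε l) ^ stmt4m N * (muScaled N k μ ε j) ^ (-stmt4m N)) := hb
    _ ≤ (alphaN N ^ pexp N * alphaN N * stmt4Iq N) * (D * ε ^ T) := by
        refine mul_le_mul_of_nonneg_left hr2 ?_
        positivity
    _ ≤ (KAB + 1) * ε ^ T := by
        have h1 : stmt4Iq N ≤ (4:ℝ) ^ stmt4m N * (stmt4c0 N + stmt4Iq N + 1) := by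
          have h3 : stmt4c0 N + stmt4Iq N + 1 ≤ (4:ℝ) ^ stmt4m N * (stmt4c0 N + stmt4Iq N + 1) :=
            le_mul_of_one_le_left (by linarith) h4m
          linarith
        have hKle : alphaN N ^ pexp N * alphaN N * stmt4Iq N * D ≤ KAB + 1 := by
          have h4 : alphaN N ^ pexp N * alphaN N * stmt4Iq N * D
              ≤ alphaN N ^ pexp N * alphaN N
                * ((4:ℝ) ^ stmt4m N * (stmt4c0 N + stmt4Iq N + 1)) * D := by
            refine mul_le_mul_of_nonneg_right ?_ hD0.le
            exact mul_le_mul_of_nonneg_left h1 (by positivity)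
          have h5' : alphaN N ^ pexp N * alphaN N
              * ((4:ℝ) ^ stmt4m N * (stmt4c0 N + stmt4Iq N + 1)) * D = KAB := by
            rw [hKAB]; ring
          linarith
        calc alphaN N ^ pexp N * alphaN N * stmt4Iq N * (D * ε ^ T)
            = (alphaN N ^ pexp N * alphaN N * stmt4Iq N * D) * ε ^ T := by ring
        _ ≤ (KAB + 1) * ε ^ T := mul_le_mul_of_nonneg_right hKle hεT.le
  · -- l < j : caseB
    have hljR : (l:ℝ) < (j:ℝ) := by exact_mod_cast hcase
    have habs : |(l : ℝ) - (j : ℝ)| = (j:ℝ) - (l:ℝ) := by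
      rw [abs_of_neg (by linarith)]; ring
    have hTid : (e j - e l) * stmt4m N = T := by
      rw [hT, habs, he, stmt4m]
      field_simp
      ring
    have hlk' : l < k := lt_of_lt_of_le hcase hjk
    have hlkne : l ≠ k := hlk'.ne
    have hl1k : 1 ≤ l + 1 := by omega
    have hl1k' : l + 1 ≤ k := hlk'
    have hml1 : 0 < muScaled N k μ ε (l+1) := hmSpos (l+1) hl1k hl1k'
    obtain ⟨hμl1_lb, _, _⟩ := hadm (l+1) hl1k hl1k'
    -- inner radius
    set ρ : ℝ := Real.sqrt (muScaled N k μ ε l * muScaled N k μ ε (l + 1)) with hρdef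
    have hρ : 0 < ρ := Real.sqrt_pos.2 (mul_pos hml hml1)
    -- lower bound on ρ
    set w : ℝ := (e l + e (l+1)) / 2 with hw
    have hεw : 0 < ε ^ w := Real.rpow_pos_of_pos hε _
    have hρ_lb : d * ε ^ w ≤ ρ := by
      have hsq : (d * ε ^ w) ^ 2 ≤ muScaled N k μ ε l * muScaled N k μ ε (l + 1) := by
        have e1 : (d * ε ^ w) ^ 2 = (d * d) * (ε ^ w * ε ^ w) := by ring
        have e2 : ε ^ w * ε ^ w = ε ^ e l * ε ^ e (l+1) := by
          rw [← Real.rpow_add hε, ← Real.rpow_add hε]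
          congr 1
          rw [hw]; ring
        rw [hmS, hmS, e1, e2]
        have h1 : 0 < ε ^ e l := Real.rpow_pos_of_pos hε _
        have h2 : 0 < ε ^ e (l+1) := Real.rpow_pos_of_pos hε _
        calc d * d * (ε ^ e l * ε ^ e (l+1))
            ≤ (μ l * μ (l+1)) * (ε ^ e l * ε ^ e (l+1)) := by
              refine mul_le_mul_of_nonneg_right ?_ (by positivity)
              exact mul_le_mul hμl_lb.le hμl1_lb.le hd0.le hμlpos.le
        _ = μ l * ε ^ e l * (μ (l+1) * ε ^ e (l+1)) := by ring
      calc d * ε ^ w = Real.sqrt ((d * ε ^ w) ^ 2) := (Real.sqrt_sq (by positivity)).symm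
      _ ≤ ρ := Real.sqrt_le_sqrt hsq
    -- smallness of ε
    have hεsmall : ε ^ (θ / (2 * (k:ℝ))) ≤ d ^ 3 / 2 := by
      have h2 : ε ≤ (d^3/2) ^ (2*(k:ℝ)/θ) := le_of_lt (lt_of_lt_of_le hεlt (min_le_right _ _))
      have h3 : ε ^ (θ / (2 * (k:ℝ))) ≤ ((d^3/2) ^ (2*(k:ℝ)/θ)) ^ (θ / (2 * (k:ℝ))) :=
        Real.rpow_le_rpow hε.le h2 (by positivity)
      rwa [← Real.rpow_mul (by positivity),
        show (2*(k:ℝ)/θ) * (θ / (2 * (k:ℝ))) = 1 by field_simp,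
        Real.rpow_one] at h3
    have hkey : θ / (2 * (k:ℝ)) ≤ e j - w := by
      have hexp : e j - w = (2*(j:ℝ) - 1 - 2*(l:ℝ)) * (θ / (2 * (k:ℝ))) := by
        simp only [hw, he, mul_div_assoc]
        push_cast
        ring
      have hfac : (1:ℝ) ≤ 2*(j:ℝ) - 1 - 2*(l:ℝ) := by
        have : (l:ℝ) + 1 ≤ (j:ℝ) := by exact_mod_cast hcase
        linarith
      have hcpos : (0:ℝ) ≤ θ / (2 * (k:ℝ)) := by positivity
      calc θ / (2 * (k:ℝ)) = 1 * (θ / (2 * (k:ℝ))) := (one_mul _).symm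
      _ ≤ (2*(j:ℝ) - 1 - 2*(l:ℝ)) * (θ / (2 * (k:ℝ))) := mul_le_mul_of_nonneg_right hfac hcpos
      _ = e j - w := hexp.symm
    have hεjw : ε ^ (e j - w) ≤ d ^ 3 / 2 :=
      le_trans (Real.rpow_le_rpow_of_exponent_ge hε hε1 hkey) hεsmall
    -- the σ_j condition
    have hσjcond : muScaled N k μ ε j * ‖σ j‖ ≤ ρ / 2 := by
      have hεj : 0 < ε ^ e j := Real.rpow_pos_of_pos hε _
      have h1 : muScaled N k μ ε j * ‖σ j‖ ≤ (d⁻¹ * ε ^ e j) * d⁻¹ := by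
        rw [hmS]
        refine mul_le_mul ?_ (by rw [← one_div]; exact hσj_ub.le) (norm_nonneg _) (by positivity)
        refine mul_le_mul_of_nonneg_right ?_ hεj.le
        rw [← one_div]; exact hμj_ub.le
      have h2 : (d⁻¹ * ε ^ e j) * d⁻¹ = d⁻¹ * d⁻¹ * (ε ^ (e j - w) * ε ^ w) := by
        rw [← Real.rpow_add hε]
        have : e j - w + w = e j := by ring
        rw [this]; ring
      have h3 : d⁻¹ * d⁻¹ * (ε ^ (e j - w) * ε ^ w) ≤ d⁻¹ * d⁻¹ * ((d^3/2) * ε ^ w) := by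
        refine mul_le_mul_of_nonneg_left ?_ (by positivity)
        exact mul_le_mul_of_nonneg_right hεjw hεw.le
      have h4 : d⁻¹ * d⁻¹ * ((d^3/2) * ε ^ w) = (d * ε ^ w) / 2 := by
        field_simp
      have h5' : (d * ε ^ w) / 2 ≤ ρ / 2 := by linarith
      linarith [h1, h2 ▸ h1, h3, h4 ▸ h3]
    -- apply caseB
    have hannmeas : MeasurableSet (annulus N k ξ₀ μ r ε l) :=
      measurableSet_ball.diff measurableSet_ball
    have hsub : ∀ x ∈ annulus N k ξ₀ μ r ε l, ρ ≤ dist x ξ₀ := by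
      intro x hx
      have h2 := hx.2
      rw [if_neg hlkne] at h2
      exact le_of_not_gt fun hcon => h2 (mem_ball.2 hcon)
    have hb := caseB hN hml hmj hρ ξ₀ (σ l) (σ j) hσjcond hannmeas hsub
    have hr2 := ratio j l hj1 hjk hl1 hlk
    rw [hTid] at hr2
    calc ∫ x in annulus N k ξ₀ μ r ε l,
          Ubub N k ξ₀ μ σ ε l x ^ pexp N * Ubub N k ξ₀ μ σ ε j x
        ≤ (alphaN N ^ pexp N * alphaN N * (4:ℝ) ^ stmt4m N * (stmt4c0 N + stmt4Iq N))
            * ((muScaled N k μ ε j) ^ stmt4m N * (muScaled N k μ ε l) ^ (-stmt4m N)) := hb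
    _ ≤ (alphaN N ^ pexp N * alphaN N * (4:ℝ) ^ stmt4m N * (stmt4c0 N + stmt4Iq N))
          * (D * ε ^ T) := by
        refine mul_le_mul_of_nonneg_left hr2 ?_
        have : (0:ℝ) ≤ stmt4c0 N + stmt4Iq N := by linarith
        positivity
    _ ≤ (KAB + 1) * ε ^ T := by
        have hKle : alphaN N ^ pexp N * alphaN N * (4:ℝ) ^ stmt4m N * (stmt4c0 N + stmt4Iq N) * D
            ≤ KAB + 1 := by
          have h4 : alphaN N ^ pexp N * alphaN N * (4:ℝ) ^ stmt4m N * (stmt4c0 N + stmt4Iq N) * D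
              ≤ alphaN N ^ pexp N * alphaN N * (4:ℝ) ^ stmt4m N * (stmt4c0 N + stmt4Iq N + 1) * D := by
            refine mul_le_mul_of_nonneg_right ?_ hD0.le
            refine mul_le_mul_of_nonneg_left (by linarith) (by positivity)
          have h5' : alphaN N ^ pexp N * alphaN N * (4:ℝ) ^ stmt4m N
              * (stmt4c0 N + stmt4Iq N + 1) * D = KAB := by
            rw [hKAB]; ring
          linarith
        calc alphaN N ^ pexp N * alphaN N * (4:ℝ) ^ stmt4m N * (stmt4c0 N + stmt4Iq N) * (D * ε ^ T)
            = (alphaN N ^ pexp N * alphaN N * (4:ℝ) ^ stmt4m N * (stmt4c0 N + stmt4Iq N) * D)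
              * ε ^ T := by ring
        _ ≤ (KAB + 1) * ε ^ T := mul_le_mul_of_nonneg_right hKle hεT.le
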